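/- For every r > 0, the Vietoris-Rips complex Σ^I_{U_r} of the unit interval I = [0,1] with relation U_r = {(s,t) : |s − t| < r} has trivial reduced simplicial homology in all degrees (is acyclic). -/

import Mathlib

/-! Simplicial (Vietoris–Rips) homology of the clique complex of a relation
`U ⊆ X × X`, built from ordered simplices with integer coefficients, together
with the induced maps coming from inclusions of relations and the resulting
inverse-limit Vietoris–Rips homology of a semi-uniform structure. -/

namespace VR

variable {X : Type*}

/-- Ordered `n`-simplices of the clique (Vietoris–Rips) complex of the relation `U`:
`(n+1)`-tuples of vertices that are pairwise related by `U`. -/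
def Simp (U : Set (X × X)) (n : ℕ) : Type _ :=
  {σ : Fin (n + 1) → X // ∀ i j, (σ i, σ j) ∈ U}

/-- Simplicial `n`-chains with integer coefficients. -/
abbrev Chains (U : Set (X × X)) (n : ℕ) : Type _ := Simp U n →₀ ℤ

/-- The `i`-th face of an ordered simplex. -/
def face (U : Set (X × X)) {n : ℕ} (i : Fin (n + 2)) (σ : Simp U (n + 1)) : Simp U n :=
  ⟨σ.1 ∘ i.succAbove, fun _ _ => σ.2 _ _⟩

/-- The simplicial boundary map. -/
noncomputable def bd (U : Set (X × X)) (n : ℕ) : Chains U (n + 1) →+ Chains U n :=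
  Finsupp.liftAddHom fun σ => zmultiplesHom _
    (∑ i : Fin (n + 2), (-1 : ℤ) ^ (i : ℕ) • Finsupp.single (face U i σ) (1 : ℤ))

/-- The augmentation map on `0`-chains. -/
noncomputable def aug (U : Set (X × X)) : Chains U 0 →+ ℤ :=
  Finsupp.liftAddHom fun _ => zmultiplesHom ℤ (1 : ℤ)

/-- Cycles (unreduced). -/
noncomputable def cycles (U : Set (X × X)) : (n : ℕ) → AddSubgroup (Chains U n)
  | 0 => ⊤
  | n + 1 => (bd U n).ker

/-- Reduced cycles (using the augmentation in degree `0`). -/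
noncomputable def rcycles (U : Set (X × X)) : (n : ℕ) → AddSubgroup (Chains U n)
  | 0 => (aug U).ker
  | n + 1 => (bd U n).ker

/-- Boundaries. -/
noncomputable def bdries (U : Set (X × X)) (n : ℕ) : AddSubgroup (Chains U n) :=
  (bd U n).range

/-- Simplicial homology of the clique complex of `U`. -/
noncomputable def H (U : Set (X × X)) (n : ℕ) : Type _ :=
  ↥(cycles U n) ⧸ (bdries U n).addSubgroupOf (cycles U n)

noncomputable instance (U : Set (X × X)) (n : ℕ) : AddCommGroup (H U n) :=
  inferInstanceAs (AddCommGroup (_ ⧸ _))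

/-- Reduced simplicial homology of the clique complex of `U`. -/
noncomputable def redH (U : Set (X × X)) (n : ℕ) : Type _ :=
  ↥(rcycles U n) ⧸ (bdries U n).addSubgroupOf (rcycles U n)

noncomputable instance (U : Set (X × X)) (n : ℕ) : AddCommGroup (redH U n) :=
  inferInstanceAs (AddCommGroup (_ ⧸ _))

/-- The chain map induced by an inclusion of relations `U ⊆ U'`. -/
noncomputable def chainsMap {U U' : Set (X × X)} (h : U ⊆ U') (n : ℕ) :
    Chains U n →+ Chains U' n :=
  Finsupp.mapDomain.addMonoidHom fun σ => ⟨σ.1, fun i j => h (σ.2 i j)⟩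

lemma bd_comm {U U' : Set (X × X)} (h : U ⊆ U') (n : ℕ) (x : Chains U (n + 1)) :
    bd U' n (chainsMap h (n + 1) x) = chainsMap h n (bd U n x) := by
  induction x using Finsupp.induction_linear with
  | zero => simp
  | add a b ha hb => simp [map_add, ha, hb]
  | single σ m =>
    show bd U' n (Finsupp.mapDomain _ (Finsupp.single σ m)) =
      Finsupp.mapDomain _ (bd U n (Finsupp.single σ m))
    erw [Finsupp.mapDomain_single]
    simp only [bd]
    erw [Finsupp.liftAddHom_apply_single, Finsupp.liftAddHom_apply_single]
    simp only [zmultiplesHom_apply]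
    erw [← Finsupp.mapDomain.addMonoidHom_apply, map_zsmul, map_sum]
    congr 1
    refine Finset.sum_congr rfl fun i _ => ?_
    erw [map_zsmul, Finsupp.mapDomain.addMonoidHom_apply, Finsupp.mapDomain_single]
    rfl

lemma chainsMap_cycles {U U' : Set (X × X)} (h : U ⊆ U') (n : ℕ)
    (x : ↥(cycles U n)) : chainsMap h n x.1 ∈ cycles U' n := by
  cases n with
  | zero => trivial
  | succ n =>
    have hx : bd U n x.1 = 0 := x.2
    show chainsMap h (n + 1) x.1 ∈ (bd U' n).ker
    rw [AddMonoidHom.mem_ker, bd_comm h n x.1, hx, map_zero]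

/-- The induced map on cycles. -/
noncomputable def cyclesMap {U U' : Set (X × X)} (h : U ⊆ U') (n : ℕ) :
    ↥(cycles U n) →+ ↥(cycles U' n) :=
  AddMonoidHom.codRestrict ((chainsMap h n).comp (cycles U n).subtype) (cycles U' n)
    (fun x => chainsMap_cycles h n x)

/-- The induced map on homology. -/
noncomputable def Hmap {U U' : Set (X × X)} (h : U ⊆ U') (n : ℕ) : H U n →+ H U' n :=
  QuotientAddGroup.map _ _ (cyclesMap h n) (by
    intro x hx
    rcases hx with ⟨y, hy⟩
    refine AddSubgroup.mem_comap.mpr ?_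
    show chainsMap h n x.1 ∈ (bd U' n).range
    exact ⟨chainsMap h (n + 1) y, by rw [bd_comm h n y, hy]; rfl⟩)

/-- The Vietoris–Rips homology of a semi-uniform structure `F`, presented concretely
as the inverse limit (group of compatible families) of the homologies `H U n`
over `U ∈ F`, directed by inclusion. -/
noncomputable def VRhomology (F : Set (Set (X × X))) (n : ℕ) :
    AddSubgroup ((U : F) → H U.1 n) where
  carrier := {x | ∀ (U U' : F) (h : U.1 ⊆ U'.1), Hmap h n (x U) = x U'}
  zero_mem' := by intro U U' h; simp
  add_mem' := by intro a b ha hb U U' h; simp [ha U U' h, hb U U' h]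
  neg_mem' := by intro a ha U U' h; simp [ha U U' h]

end VR
namespace VRAux
open VR

lemma succAbove_val {n : ℕ} (p : Fin (n+1)) (i : Fin n) :
    ((p.succAbove i : Fin (n+1)) : ℕ) = if (i:ℕ) < (p:ℕ) then (i:ℕ) else (i:ℕ)+1 := by
  rw [Fin.succAbove]
  split_ifs with h1 h2 h2 <;> simp_all [Fin.lt_def]

variable {X : Type*} {U U' : Set (X × X)}

/-- Contiguity data for a pair of vertex maps. -/
structure Contig (U U' : Set (X × X)) (f g : X → X) : Prop where
  ff : ∀ {s t : X}, (s,t) ∈ U → (f s, f t) ∈ U'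
  fg : ∀ {s t : X}, (s,t) ∈ U → (f s, g t) ∈ U'
  gf : ∀ {s t : X}, (s,t) ∈ U → (g s, f t) ∈ U'
  gg : ∀ {s t : X}, (s,t) ∈ U → (g s, g t) ∈ U'

variable {f g : X → X}

/-- The `i`-th prism simplex over `σ`. -/
def P (hc : Contig U U' f g) {n : ℕ} (σ : Simp U n) (i : Fin (n+1)) : Simp U' (n+1) :=
  ⟨fun j => if (j:ℕ) ≤ (i:ℕ) then
      f (σ.1 ⟨min (j:ℕ) n, by omega⟩)
    else
      g (σ.1 ⟨min ((j:ℕ)-1) n, by omega⟩),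
  by
    intro j k
    dsimp only
    by_cases hj : (j:ℕ) ≤ (i:ℕ) <;> by_cases hk : (k:ℕ) ≤ (i:ℕ) <;>
      simp only [if_pos, if_neg, hj, hk, if_true, if_false]
    · exact hc.ff (σ.2 _ _)
    · exact hc.fg (σ.2 _ _)
    · exact hc.gf (σ.2 _ _)
    · exact hc.gg (σ.2 _ _)⟩

/-- `Q σ k` : first `k` vertices via `f`, rest via `g`. -/
def Q (hc : Contig U U' f g) {n : ℕ} (σ : Simp U n) (k : ℕ) : Simp U' n :=
  ⟨fun j => if (j:ℕ) < k then f (σ.1 j) else g (σ.1 j),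
  by
    intro j l
    dsimp only
    by_cases hj : (j:ℕ) < k <;> by_cases hl : (l:ℕ) < k <;>
      simp only [if_pos, if_neg, hj, hl, if_true, if_false]
    · exact hc.ff (σ.2 _ _)
    · exact hc.fg (σ.2 _ _)
    · exact hc.gf (σ.2 _ _)
    · exact hc.gg (σ.2 _ _)⟩

end VRAux
namespace VRAux
open VR
variable {X : Type*} {U U' : Set (X × X)} {f g : X → X}

lemma face_P_of_lt {n : ℕ} (hc : Contig U U' f g) (σ : Simp U (n+1)) (i : Fin (n+2))
    (j : Fin (n+3)) (i' : Fin (n+1)) (j' : Fin (n+2))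
    (hij : (j:ℕ) < (i:ℕ)) (hi : (i':ℕ)+1 = (i:ℕ)) (hj : (j':ℕ) = (j:ℕ)) :
    face U' j (P hc σ i) = P hc (face U j' σ) i' := by
  have hm' : (i:ℕ) < n + 2 := i.isLt
  have hj3 : (j:ℕ) < n + 3 := j.isLt
  apply Subtype.ext; funext m
  have hm : (m:ℕ) < n + 2 := m.isLt
  show (P hc σ i).1 (j.succAbove m) = (P hc (face U j' σ) i').1 m
  simp only [P, face, Function.comp, succAbove_val]
  split_ifs <;>
    first
      | (exfalso; omega)
      | (rw [if_pos (by omega : (m:ℕ) ≤ (i':ℕ))]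
         apply congrArg f; apply congrArg σ.1; apply Fin.ext
         simp only [succAbove_val, Fin.val_mk]
         split_ifs <;> omega)
      | (rw [if_neg (by omega : ¬ (m:ℕ) ≤ (i':ℕ))]
         apply congrArg g; apply congrArg σ.1; apply Fin.ext
         simp only [succAbove_val, Fin.val_mk]
         split_ifs <;> omega)

lemma face_P_of_gt {n : ℕ} (hc : Contig U U' f g) (σ : Simp U (n+1)) (i : Fin (n+2))
    (j : Fin (n+3)) (i' : Fin (n+1)) (j' : Fin (n+2))
    (hij : (i:ℕ)+1 < (j:ℕ)) (hi : (i':ℕ) = (i:ℕ)) (hj : (j':ℕ)+1 = (j:ℕ)) :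
    face U' j (P hc σ i) = P hc (face U j' σ) i' := by
  have hm' : (i:ℕ) < n + 2 := i.isLt
  have hj3 : (j:ℕ) < n + 3 := j.isLt
  have hj2 : (j':ℕ) < n + 2 := j'.isLt
  apply Subtype.ext; funext m
  have hm : (m:ℕ) < n + 2 := m.isLt
  show (P hc σ i).1 (j.succAbove m) = (P hc (face U j' σ) i').1 m
  simp only [P, face, Function.comp, succAbove_val]
  split_ifs <;>
    first
      | (exfalso; omega)
      | (rw [if_pos (by omega : (m:ℕ) ≤ (i':ℕ))]
         apply congrArg f; apply congrArg σ.1; apply Fin.ext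
         simp only [succAbove_val, Fin.val_mk]
         split_ifs <;> omega)
      | (rw [if_neg (by omega : ¬ (m:ℕ) ≤ (i':ℕ))]
         apply congrArg g; apply congrArg σ.1; apply Fin.ext
         simp only [succAbove_val, Fin.val_mk]
         split_ifs <;> omega)

lemma face_P_self {n : ℕ} (hc : Contig U U' f g) (σ : Simp U (n+1)) (i : Fin (n+2))
    (j : Fin (n+3)) (hj : (j:ℕ) = (i:ℕ)) :
    face U' j (P hc σ i) = Q hc σ (i:ℕ) := by
  have hm' : (i:ℕ) < n + 2 := i.isLt
  apply Subtype.ext; funext m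
  have hm : (m:ℕ) < n + 2 := m.isLt
  show (P hc σ i).1 (j.succAbove m) = (Q hc σ (i:ℕ)).1 m
  simp only [P, Q, Function.comp, succAbove_val]
  split_ifs <;>
    first
      | (exfalso; omega)
      | (rw [if_pos (by omega : (m:ℕ) < (i:ℕ))]
         apply congrArg f; apply congrArg σ.1; apply Fin.ext
         simp only [Fin.val_mk]; omega)
      | (rw [if_neg (by omega : ¬ (m:ℕ) < (i:ℕ))]
         apply congrArg g; apply congrArg σ.1; apply Fin.ext
         simp only [Fin.val_mk]; omega)

lemma face_P_succ {n : ℕ} (hc : Contig U U' f g) (σ : Simp U (n+1)) (i : Fin (n+2))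
    (j : Fin (n+3)) (hj : (j:ℕ) = (i:ℕ)+1) :
    face U' j (P hc σ i) = Q hc σ ((i:ℕ)+1) := by
  have hm' : (i:ℕ) < n + 2 := i.isLt
  apply Subtype.ext; funext m
  have hm : (m:ℕ) < n + 2 := m.isLt
  show (P hc σ i).1 (j.succAbove m) = (Q hc σ ((i:ℕ)+1)).1 m
  simp only [P, Q, Function.comp, succAbove_val]
  split_ifs <;>
    first
      | (exfalso; omega)
      | (rw [if_pos (by omega : (m:ℕ) < (i:ℕ)+1)]
         apply congrArg f; apply congrArg σ.1; apply Fin.ext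
         simp only [Fin.val_mk]; omega)
      | (rw [if_neg (by omega : ¬ (m:ℕ) < (i:ℕ)+1)]
         apply congrArg g; apply congrArg σ.1; apply Fin.ext
         simp only [Fin.val_mk]; omega)

end VRAux
namespace VRAux
open VR Finset
variable {X : Type*} {U U' : Set (X × X)} {f g : X → X}

/-- Vertex map on simplices. -/
def mapSimp (φ : X → X) (hφ : ∀ {s t : X}, (s,t) ∈ U → (φ s, φ t) ∈ U') {n : ℕ}
    (σ : Simp U n) : Simp U' n :=
  ⟨φ ∘ σ.1, fun i j => hφ (σ.2 i j)⟩

lemma Q_zero {n : ℕ} (hc : Contig U U' f g) (σ : Simp U n) :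
    Q hc σ 0 = mapSimp g hc.gg σ := by
  apply Subtype.ext; funext j
  simp [Q, mapSimp]

lemma Q_top {n : ℕ} (hc : Contig U U' f g) (σ : Simp U n) (k : ℕ) (hk : n + 1 ≤ k) :
    Q hc σ k = mapSimp f hc.ff σ := by
  apply Subtype.ext; funext j
  have := j.isLt
  simp only [Q, mapSimp, Function.comp]
  rw [if_pos (by omega)]

/-- Chain map induced by a vertex map. -/
noncomputable def mapChains (φ : X → X) (hφ : ∀ {s t : X}, (s,t) ∈ U → (φ s, φ t) ∈ U')
    (n : ℕ) : Chains U n →+ Chains U' n :=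
  Finsupp.mapDomain.addMonoidHom (mapSimp φ hφ)

lemma face_mapSimp (φ : X → X) (hφ : ∀ {s t : X}, (s,t) ∈ U → (φ s, φ t) ∈ U') {n : ℕ}
    (k : Fin (n+2)) (σ : Simp U (n+1)) :
    face U' k (mapSimp φ hφ σ) = mapSimp φ hφ (face U k σ) := rfl

lemma bd_mapChains (φ : X → X) (hφ : ∀ {s t : X}, (s,t) ∈ U → (φ s, φ t) ∈ U') (n : ℕ)
    (x : Chains U (n + 1)) :
    bd U' n (mapChains φ hφ (n+1) x) = mapChains φ hφ n (bd U n x) := by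
  induction x using Finsupp.induction_linear with
  | zero => simp
  | add a b ha hb => simp [map_add, ha, hb]
  | single σ m =>
    show bd U' n (Finsupp.mapDomain _ (Finsupp.single σ m)) =
      Finsupp.mapDomain _ (bd U n (Finsupp.single σ m))
    rw [Finsupp.mapDomain_single]
    simp only [bd, Finsupp.liftAddHom_apply_single, zmultiplesHom_apply]
    rw [← Finsupp.mapDomain.addMonoidHom_apply, map_zsmul, map_sum]
    congr 1
    refine Finset.sum_congr rfl fun i _ => ?_
    rw [map_zsmul, Finsupp.mapDomain.addMonoidHom_apply, Finsupp.mapDomain_single]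
    rfl

/-- The prism (chain homotopy) operator. -/
noncomputable def hchain (hc : Contig U U' f g) (n : ℕ) : Chains U n →+ Chains U' (n+1) :=
  Finsupp.liftAddHom fun σ => zmultiplesHom _
    (∑ i : Fin (n + 1), (-1 : ℤ) ^ (i : ℕ) • Finsupp.single (P hc σ i) (1 : ℤ))

lemma hchain_single (hc : Contig U U' f g) (n : ℕ) (σ : Simp U n) :
    hchain hc n (Finsupp.single σ 1) =
      ∑ i : Fin (n + 1), (-1 : ℤ) ^ (i : ℕ) • Finsupp.single (P hc σ i) (1 : ℤ) := by
  simp [hchain, Finsupp.liftAddHom_apply_single]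

/-- Auxiliary ℕ-indexed families. -/
noncomputable def Fd (hc : Contig U U' f g) {n : ℕ} (σ : Simp U (n+1)) (i j : ℕ) :
    Chains U' (n+1) :=
  if h : i < n + 2 ∧ j < n + 3 then
    ((-1 : ℤ) ^ (i + j)) • Finsupp.single (face U' ⟨j, h.2⟩ (P hc σ ⟨i, h.1⟩)) (1 : ℤ)
  else 0

noncomputable def Td (hc : Contig U U' f g) {n : ℕ} (σ : Simp U (n+1)) (i j : ℕ) :
    Chains U' (n+1) :=
  if h : i < n + 1 ∧ j < n + 2 then
    ((-1 : ℤ) ^ (i + j)) • Finsupp.single (P hc (face U ⟨j, h.2⟩ σ) ⟨i, h.1⟩) (1 : ℤ)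
  else 0

noncomputable def qd (hc : Contig U U' f g) {n : ℕ} (σ : Simp U (n+1)) (k : ℕ) :
    Chains U' (n+1) :=
  Finsupp.single (Q hc σ k) (1 : ℤ)

lemma Fd_eq (hc : Contig U U' f g) {n : ℕ} (σ : Simp U (n+1)) (i : Fin (n+2))
    (j : Fin (n+3)) :
    Fd hc σ (i:ℕ) (j:ℕ) =
      ((-1 : ℤ) ^ ((i:ℕ) + (j:ℕ))) • Finsupp.single (face U' j (P hc σ i)) (1 : ℤ) := by
  rw [Fd, dif_pos ⟨i.isLt, j.isLt⟩]

lemma Td_eq (hc : Contig U U' f g) {n : ℕ} (σ : Simp U (n+1)) (i : Fin (n+1))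
    (j : Fin (n+2)) :
    Td hc σ (i:ℕ) (j:ℕ) =
      ((-1 : ℤ) ^ ((i:ℕ) + (j:ℕ))) • Finsupp.single (P hc (face U j σ) i) (1 : ℤ) := by
  rw [Td, dif_pos ⟨i.isLt, j.isLt⟩]

lemma Fd_lt (hc : Contig U U' f g) {n : ℕ} (σ : Simp U (n+1)) (i j : ℕ)
    (hi : i < n + 2) (hj : j < i) : Fd hc σ i j = - Td hc σ (i-1) j := by
  rw [Fd, dif_pos ⟨hi, by omega⟩, Td, dif_pos ⟨by omega, by omega⟩]
  rw [face_P_of_lt hc σ ⟨i, hi⟩ ⟨j, by omega⟩ ⟨i-1, by omega⟩ ⟨j, by omega⟩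
    (by simpa using hj) (by simp; omega) (by simp)]
  rw [show i + j = ((i-1) + j) + 1 by omega, pow_succ, mul_smul]
  rw [neg_one_smul, smul_neg]

lemma Fd_gt (hc : Contig U U' f g) {n : ℕ} (σ : Simp U (n+1)) (i j : ℕ)
    (hi : i < n + 2) (hj1 : i + 1 < j) (hj2 : j < n + 3) :
    Fd hc σ i j = - Td hc σ i (j-1) := by
  rw [Fd, dif_pos ⟨hi, hj2⟩, Td, dif_pos ⟨by omega, by omega⟩]
  rw [face_P_of_gt hc σ ⟨i, hi⟩ ⟨j, hj2⟩ ⟨i, by omega⟩ ⟨j-1, by omega⟩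
    (by simpa using hj1) (by simp) (by simp; omega)]
  rw [show i + j = (i + (j-1)) + 1 by omega, pow_succ, mul_smul]
  rw [neg_one_smul, smul_neg]

lemma Fd_diag (hc : Contig U U' f g) {n : ℕ} (σ : Simp U (n+1)) (i : ℕ)
    (hi : i < n + 2) : Fd hc σ i i = qd hc σ i := by
  rw [Fd, dif_pos ⟨hi, by omega⟩]
  rw [face_P_self hc σ ⟨i, hi⟩ ⟨i, by omega⟩ (by simp)]
  rw [Even.neg_one_pow ⟨i, by omega⟩, one_smul]
  rfl

lemma Fd_diag' (hc : Contig U U' f g) {n : ℕ} (σ : Simp U (n+1)) (i : ℕ)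
    (hi : i < n + 2) : Fd hc σ i (i+1) = - qd hc σ (i+1) := by
  rw [Fd, dif_pos ⟨hi, by omega⟩]
  rw [face_P_succ hc σ ⟨i, hi⟩ ⟨i+1, by omega⟩ (by simp)]
  rw [Odd.neg_one_pow ⟨i, by omega⟩, neg_one_smul]
  rfl

end VRAux
namespace VRAux
open VR Finset
variable {X : Type*} {U U' : Set (X × X)} {f g : X → X}

lemma key_sum (hc : Contig U U' f g) {n : ℕ} (σ : Simp U (n+1)) :
    ∑ i ∈ range (n+2), ∑ j ∈ range (n+3), Fd hc σ i j
      = qd hc σ 0 - qd hc σ (n+2)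
        - ∑ j ∈ range (n+2), ∑ i ∈ range (n+1), Td hc σ i j := by
  have inner : ∀ i ∈ range (n+2), ∑ j ∈ range (n+3), Fd hc σ i j
      = (qd hc σ i - qd hc σ (i+1))
        - ((∑ j ∈ Ico 0 i, Td hc σ (i-1) j) + ∑ j ∈ Ico (i+1) (n+2), Td hc σ i j) := by
    intro i hi
    rw [mem_range] at hi
    rw [range_eq_Ico, ← Finset.sum_Ico_consecutive _ (Nat.zero_le i) (by omega : i ≤ n+3)]
    rw [Finset.sum_eq_sum_Ico_succ_bot (by omega : i < n+3)]
    rw [Finset.sum_eq_sum_Ico_succ_bot (by omega : i+1 < n+3)]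
    have e1 : ∑ j ∈ Ico 0 i, Fd hc σ i j = - ∑ j ∈ Ico 0 i, Td hc σ (i-1) j := by
      rw [← Finset.sum_neg_distrib]
      refine Finset.sum_congr rfl fun j hj => ?_
      rw [mem_Ico] at hj
      exact Fd_lt hc σ i j hi hj.2
    have e4 : ∑ j ∈ Ico (i+2) (n+3), Fd hc σ i j
        = - ∑ j ∈ Ico (i+1) (n+2), Td hc σ i j := by
      rw [← Finset.sum_neg_distrib]
      rw [Finset.sum_Ico_eq_sum_range, Finset.sum_Ico_eq_sum_range]
      rw [show n + 3 - (i + 2) = n + 2 - (i + 1) by omega]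
      refine Finset.sum_congr rfl fun k hk => ?_
      rw [mem_range] at hk
      rw [Fd_gt hc σ i (i+2+k) hi (by omega) (by omega)]
      congr 2
      omega
    rw [e1, Fd_diag hc σ i hi, Fd_diag' hc σ i hi, e4]
    abel
  rw [Finset.sum_congr rfl inner, Finset.sum_sub_distrib,
    Finset.sum_range_sub' (qd hc σ) (n+2)]
  congr 1
  rw [Finset.sum_add_distrib]
  rw [Finset.sum_range_succ' (fun i => ∑ j ∈ Ico 0 i, Td hc σ (i-1) j) (n+1)]
  rw [Finset.sum_range_succ (fun i => ∑ j ∈ Ico (i+1) (n+2), Td hc σ i j) (n+1)]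
  simp only [Ico_self, sum_empty, add_zero, Nat.add_sub_cancel]
  conv_rhs => rw [Finset.sum_comm]
  rw [← Finset.sum_add_distrib]
  refine Finset.sum_congr rfl fun i hi => ?_
  rw [mem_range] at hi
  rw [Finset.sum_Ico_consecutive _ (Nat.zero_le (i+1)) (by omega : i+1 ≤ n+2)]
  rw [range_eq_Ico]
end VRAux
namespace VRAux
open VR Finset
variable {X : Type*} {U U' : Set (X × X)} {f g : X → X}

lemma bd_single {n : ℕ} (τ : Simp U' (n+1)) :
    bd U' n (Finsupp.single τ 1) =
      ∑ j : Fin (n+2), (-1:ℤ)^(j:ℕ) • Finsupp.single (face U' j τ) (1:ℤ) := by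
  simp [bd, Finsupp.liftAddHom_apply_single]

lemma mapChains_single (φ : X → X) (hφ : ∀ {s t : X}, (s,t) ∈ U → (φ s, φ t) ∈ U')
    {n : ℕ} (σ : Simp U n) (m : ℤ) :
    mapChains φ hφ n (Finsupp.single σ m) = Finsupp.single (mapSimp φ hφ σ) m := by
  simp [mapChains, Finsupp.mapDomain_single]

lemma key (hc : Contig U U' f g) {n : ℕ} (σ : Simp U (n+1)) :
    bd U' (n+1) (hchain hc (n+1) (Finsupp.single σ 1)) =
      mapChains g hc.gg (n+1) (Finsupp.single σ 1)
        - mapChains f hc.ff (n+1) (Finsupp.single σ 1)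
        - hchain hc n (bd U n (Finsupp.single σ 1)) := by
  have hg : mapChains g hc.gg (n+1) (Finsupp.single σ 1) = qd hc σ 0 := by
    rw [mapChains_single, qd, Q_zero]
  have hf : mapChains f hc.ff (n+1) (Finsupp.single σ 1) = qd hc σ (n+2) := by
    rw [mapChains_single, qd, Q_top hc σ (n+2) (by omega)]
  have hh : hchain hc n (bd U n (Finsupp.single σ 1))
      = ∑ j ∈ range (n+2), ∑ i ∈ range (n+1), Td hc σ i j := by
    rw [bd_single, map_sum]
    have R : ∀ j : Fin (n+2),
        hchain hc n ((-1:ℤ)^(j:ℕ) • Finsupp.single (face U j σ) (1:ℤ))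
          = ∑ i ∈ range (n+1), Td hc σ i (j:ℕ) := by
      intro j
      rw [map_zsmul, hchain_single, Finset.smul_sum,
        ← Fin.sum_univ_eq_sum_range (fun i => Td hc σ i (j:ℕ)) (n+1)]
      refine Finset.sum_congr rfl fun i _ => ?_
      rw [Td_eq, pow_add, mul_smul, smul_comm]
    rw [Finset.sum_congr rfl fun j _ => R j,
      Fin.sum_univ_eq_sum_range (fun j => ∑ i ∈ range (n+1), Td hc σ i j) (n+2)]
  rw [hg, hf, hh, hchain_single, map_sum]
  have L : ∀ i : Fin (n+2), bd U' (n+1) ((-1:ℤ)^(i:ℕ) • Finsupp.single (P hc σ i) (1:ℤ))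
      = ∑ j ∈ range (n+3), Fd hc σ (i:ℕ) j := by
    intro i
    rw [map_zsmul, bd_single, Finset.smul_sum,
      ← Fin.sum_univ_eq_sum_range (fun j => Fd hc σ (i:ℕ) j) (n+3)]
    refine Finset.sum_congr rfl fun j _ => ?_
    rw [Fd_eq, pow_add, mul_smul]
  rw [Finset.sum_congr rfl fun i _ => L i,
    Fin.sum_univ_eq_sum_range (fun i => ∑ j ∈ range (n+3), Fd hc σ i j) (n+2)]
  exact key_sum hc σ

lemma homotopy (hc : Contig U U' f g) {n : ℕ} (x : Chains U (n+1)) :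
    bd U' (n+1) (hchain hc (n+1) x) =
      mapChains g hc.gg (n+1) x - mapChains f hc.ff (n+1) x - hchain hc n (bd U n x) := by
  induction x using Finsupp.induction_linear with
  | zero => simp
  | add a b ha hb =>
    simp only [map_add, ha, hb]
    abel
  | single σ m =>
    have h1 : Finsupp.single σ m = m • Finsupp.single σ (1:ℤ) := by
      rw [Finsupp.smul_single, smul_eq_mul, mul_one]
    rw [h1, map_zsmul, map_zsmul, map_zsmul, map_zsmul, map_zsmul, key hc σ]
    rw [smul_sub, smul_sub, map_zsmul]

lemma face_P_zero0 (hc : Contig U U' f g) (σ : Simp U 0) :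
    face U' 0 (P hc σ 0) = mapSimp g hc.gg σ := by
  apply Subtype.ext; funext m
  have hm : (m:ℕ) = 0 := by omega
  show (P hc σ 0).1 ((0 : Fin 2).succAbove m) = (mapSimp g hc.gg σ).1 m
  simp only [P, mapSimp, Function.comp, succAbove_val, Fin.val_zero, Fin.val_one]
  split_ifs <;>
    first
      | (exfalso; omega)
      | (apply congrArg g; apply congrArg σ.1; apply Fin.ext;
         simp only [Fin.val_mk]; omega)

lemma face_P_one0 (hc : Contig U U' f g) (σ : Simp U 0) :
    face U' 1 (P hc σ 0) = mapSimp f hc.ff σ := by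
  apply Subtype.ext; funext m
  have hm : (m:ℕ) = 0 := by omega
  show (P hc σ 0).1 ((1 : Fin 2).succAbove m) = (mapSimp f hc.ff σ).1 m
  simp only [P, mapSimp, Function.comp, succAbove_val, Fin.val_zero, Fin.val_one]
  split_ifs <;>
    first
      | (exfalso; omega)
      | (apply congrArg f; apply congrArg σ.1; apply Fin.ext;
         simp only [Fin.val_mk]; omega)

lemma homotopy0 (hc : Contig U U' f g) (x : Chains U 0) :
    bd U' 0 (hchain hc 0 x) = mapChains g hc.gg 0 x - mapChains f hc.ff 0 x := by
  induction x using Finsupp.induction_linear with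
  | zero => simp
  | add a b ha hb =>
    simp only [map_add, ha, hb]
    abel
  | single σ m =>
    have h1 : Finsupp.single σ m = m • Finsupp.single σ (1:ℤ) := by
      rw [Finsupp.smul_single, smul_eq_mul, mul_one]
    rw [h1, map_zsmul, map_zsmul, map_zsmul, map_zsmul, ← smul_sub]
    congr 1
    rw [hchain_single]
    rw [show ∑ i : Fin 1, (-1:ℤ)^(i:ℕ) • Finsupp.single (P hc σ i) (1:ℤ)
        = Finsupp.single (P hc σ 0) 1 by simp]
    rw [bd_single]
    rw [show ∑ j : Fin 2, (-1:ℤ)^(j:ℕ) • Finsupp.single (face U' j (P hc σ 0)) (1:ℤ)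
        = Finsupp.single (face U' 0 (P hc σ 0)) 1 - Finsupp.single (face U' 1 (P hc σ 0)) 1 by
      rw [Fin.sum_univ_two]; simp; abel]
    rw [face_P_zero0, face_P_one0, mapChains_single, mapChains_single]

end VRAux
namespace VRAux
open VR Finset
variable {X : Type*} {U U' : Set (X × X)}

/-- Constant simplex. -/
def constSimp (U : Set (X × X)) (v : X) (hv : (v,v) ∈ U) (n : ℕ) : Simp U n :=
  ⟨fun _ => v, fun _ _ => hv⟩

lemma face_constSimp (v : X) (hv : (v,v) ∈ U) (n : ℕ) (i : Fin (n+2)) :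
    face U i (constSimp U v hv (n+1)) = constSimp U v hv n := Subtype.ext rfl

lemma bd_const_single (v : X) (hv : (v,v) ∈ U) (n : ℕ) (M : ℤ) :
    bd U n (Finsupp.single (constSimp U v hv (n+1)) M)
      = if Even n then 0 else Finsupp.single (constSimp U v hv n) M := by
  rw [bd, Finsupp.liftAddHom_apply_single, zmultiplesHom_apply]
  have h1 : ∀ i : Fin (n+2), (-1:ℤ)^(i:ℕ) • Finsupp.single (face U i (constSimp U v hv (n+1))) (1:ℤ)
      = (-1:ℤ)^(i:ℕ) • Finsupp.single (constSimp U v hv n) (1:ℤ) := by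
    intro i; rw [face_constSimp]
  rw [Finset.sum_congr rfl fun i _ => h1 i]
  rw [show ∑ i : Fin (n+2), (-1:ℤ)^(i:ℕ) • Finsupp.single (constSimp U v hv n) (1:ℤ)
      = (∑ i ∈ range (n+2), (-1:ℤ)^i) • Finsupp.single (constSimp U v hv n) (1:ℤ) by
    rw [Finset.sum_smul, ← Fin.sum_univ_eq_sum_range (fun i => (-1:ℤ)^i • Finsupp.single (constSimp U v hv n) (1:ℤ)) (n+2)]]
  rw [neg_one_geom_sum]
  by_cases hev : Even n
  · rw [if_pos (by simpa [Nat.even_add] using hev), if_pos hev]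
    simp
  · rw [if_neg (by simpa [Nat.even_add] using hev), if_neg hev]
    rw [one_smul, Finsupp.smul_single, smul_eq_mul, mul_one]

/-- Sum-of-coefficients map in any degree. -/
noncomputable def tot (U : Set (X × X)) (n : ℕ) : Chains U n →+ ℤ :=
  Finsupp.liftAddHom fun _ => zmultiplesHom ℤ (1 : ℤ)

lemma tot_single {n : ℕ} (σ : Simp U n) (m : ℤ) :
    tot U n (Finsupp.single σ m) = m := by
  simp [tot, Finsupp.liftAddHom_apply_single]

lemma aug_eq_tot (x : Chains U 0) : aug U x = tot U 0 x := rfl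

lemma aug_chainsMap (h : U ⊆ U') (x : Chains U 0) :
    aug U' (chainsMap h 0 x) = aug U x := by
  induction x using Finsupp.induction_linear with
  | zero => simp
  | add a b ha hb => simp [map_add, ha, hb]
  | single σ m =>
    show aug U' (Finsupp.mapDomain _ (Finsupp.single σ m)) = _
    erw [Finsupp.mapDomain_single]
    exact (tot_single (U := U') _ m).trans (tot_single σ m).symm

lemma mapChains_const {f : X → X} (hφ : ∀ {s t : X}, (s,t) ∈ U → (f s, f t) ∈ U')
    (v : X) (hv : (v,v) ∈ U') (hconst : ∀ t, f t = v) (n : ℕ) (x : Chains U n) :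
    mapChains f hφ n x = Finsupp.single (constSimp U' v hv n) (tot U n x) := by
  induction x using Finsupp.induction_linear with
  | zero => simp
  | add a b ha hb =>
    rw [map_add, ha, hb, map_add, Finsupp.single_add]
  | single σ m =>
    rw [mapChains_single, tot_single]
    congr 1
    exact Subtype.ext (funext fun i => hconst _)

end VRAux
namespace VRAux
open VR

/-- The downward shift map on the unit interval. -/
def shift (δ : ℝ) (hδ : 0 ≤ δ) : unitInterval → unitInterval := fun t =>
  ⟨max (t.1 - δ) 0, le_max_right _ _, max_le (by linarith [t.2.2]) zero_le_one⟩

lemma shift_iter (δ : ℝ) (hδ : 0 ≤ δ) (k : ℕ) (t : unitInterval) :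
    (((shift δ hδ)^[k]) t).1 = max (t.1 - k * δ) 0 := by
  induction k with
  | zero =>
    simp only [Function.iterate_zero, id_eq, Nat.cast_zero, zero_mul, sub_zero]
    exact (max_eq_left t.2.1).symm
  | succ k ih =>
    rw [Function.iterate_succ_apply']
    show max ((((shift δ hδ)^[k]) t).1 - δ) 0 = _
    rw [ih]
    have hc : ((k+1:ℕ):ℝ) * δ = (k:ℝ)*δ + δ := by push_cast; ring
    rw [hc]
    rcases le_total (t.1 - (k:ℝ)*δ) 0 with h | h
    · rw [max_eq_right h, max_eq_right (by linarith : (0:ℝ) - δ ≤ 0),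
        max_eq_right (by linarith : t.1 - ((k:ℝ)*δ + δ) ≤ 0)]
    · rw [max_eq_left h, show t.1 - ((k:ℝ)*δ) - δ = t.1 - ((k:ℝ)*δ + δ) by ring]

lemma max_zero_lip (a b : ℝ) : |max a 0 - max b 0| ≤ |a - b| := by
  have h := abs_max_sub_max_le_max a 0 b 0
  simpa using h

lemma contig_shift (r R δ : ℝ) (hδ : 0 < δ) (hRδ : R + δ < r) (j : ℕ) :
    Contig {p : unitInterval × unitInterval | |p.1.1 - p.2.1| ≤ R}
           {p : unitInterval × unitInterval | |p.1.1 - p.2.1| < r}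
           ((shift δ hδ.le)^[j]) ((shift δ hδ.le)^[j+1]) := by
  have key2 : ∀ (k : ℕ) (s t : unitInterval), |s.1 - t.1| ≤ R →
      |(((shift δ hδ.le)^[k]) s).1 - (((shift δ hδ.le)^[k]) t).1| ≤ R := by
    intro k s t h
    rw [shift_iter, shift_iter]
    refine le_trans (le_trans (max_zero_lip _ _) ?_) h
    rw [show s.1 - (k:ℝ)*δ - (t.1 - (k:ℝ)*δ) = s.1 - t.1 by ring]
  have key3 : ∀ (k : ℕ) (t : unitInterval),
      |(((shift δ hδ.le)^[k]) t).1 - (((shift δ hδ.le)^[k+1]) t).1| ≤ δ := by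
    intro k t
    rw [shift_iter, shift_iter]
    refine le_trans (max_zero_lip _ _) (le_of_eq ?_)
    rw [show t.1 - (k:ℝ)*δ - (t.1 - ((k+1:ℕ):ℝ)*δ) = δ by push_cast; ring]
    exact abs_of_pos hδ
  have habs : ∀ (s t : unitInterval), (s,t) ∈
      {p : unitInterval × unitInterval | |p.1.1 - p.2.1| ≤ R} → |s.1 - t.1| ≤ R :=
    fun s t h => h
  refine ⟨fun {s t} hst => ?_, fun {s t} hst => ?_, fun {s t} hst => ?_, fun {s t} hst => ?_⟩
  · exact lt_of_le_of_lt (key2 j s t (habs s t hst)) (by linarith)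
  · show |_ - _| < r
    calc |(((shift δ hδ.le)^[j]) s).1 - (((shift δ hδ.le)^[j+1]) t).1|
        ≤ |(((shift δ hδ.le)^[j]) s).1 - (((shift δ hδ.le)^[j]) t).1|
          + |(((shift δ hδ.le)^[j]) t).1 - (((shift δ hδ.le)^[j+1]) t).1| := abs_sub_le _ _ _
      _ ≤ R + δ := add_le_add (key2 j s t (habs s t hst)) (key3 j t)
      _ < r := hRδ
  · show |_ - _| < r
    calc |(((shift δ hδ.le)^[j+1]) s).1 - (((shift δ hδ.le)^[j]) t).1|
        ≤ |(((shift δ hδ.le)^[j+1]) s).1 - (((shift δ hδ.le)^[j]) s).1|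
          + |(((shift δ hδ.le)^[j]) s).1 - (((shift δ hδ.le)^[j]) t).1| := abs_sub_le _ _ _
      _ ≤ δ + R := add_le_add (by rw [abs_sub_comm]; exact key3 j s) (key2 j s t (habs s t hst))
      _ < r := by linarith
  · exact lt_of_le_of_lt (key2 (j+1) s t (habs s t hst)) (by linarith)

end VRAux
namespace VRAux
open VR Finset

lemma mapChains_irrel {X : Type*} {U U' : Set (X × X)} (φ : X → X)
    (h1 h2 : ∀ {s t : X}, (s,t) ∈ U → (φ s, φ t) ∈ U') (n : ℕ) :
    mapChains (U := U) (U' := U') φ h1 n = mapChains φ h2 n := rfl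

lemma main_mem (r : ℝ) (hr : 0 < r) (n : ℕ)
    (x : Chains {p : unitInterval × unitInterval | |p.1.1 - p.2.1| < r} n)
    (hx : x ∈ rcycles {p : unitInterval × unitInterval | |p.1.1 - p.2.1| < r} n) :
    x ∈ bdries {p : unitInterval × unitInterval | |p.1.1 - p.2.1| < r} n := by
  classical
  obtain ⟨R, hR0, hRr, hbound⟩ : ∃ R, 0 ≤ R ∧ R < r ∧
      ∀ σ ∈ x.support, ∀ i j : Fin (n+1), |(σ.1 i).1 - (σ.1 j).1| ≤ R := by
    let D : Finset ℝ := (x.support ×ˢ (Finset.univ : Finset (Fin (n+1) × Fin (n+1)))).image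
        (fun q => |(q.1.1 q.2.1).1 - (q.1.1 q.2.2).1|)
    let T := insert (r/2) D
    have hne : T.Nonempty := ⟨r/2, Finset.mem_insert_self _ _⟩
    refine ⟨T.max' hne, ?_, ?_, ?_⟩
    · have := Finset.le_max' T (r/2) (Finset.mem_insert_self _ _); linarith
    · rw [Finset.max'_lt_iff]
      intro y hy
      rcases Finset.mem_insert.mp hy with h | h
      · rw [h]; linarith
      · obtain ⟨q, _, rfl⟩ := Finset.mem_image.mp h
        exact q.1.2 q.2.1 q.2.2
    · intro σ hσ i j
      refine Finset.le_max' T _ ?_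
      refine Finset.mem_insert_of_mem (Finset.mem_image.mpr ⟨(σ, (i, j)), ?_, rfl⟩)
      exact Finset.mem_product.mpr ⟨hσ, Finset.mem_univ _⟩
  have hsub : {p : unitInterval × unitInterval | |p.1.1 - p.2.1| ≤ R}
      ⊆ {p : unitInterval × unitInterval | |p.1.1 - p.2.1| < r} :=
    fun p hp => lt_of_le_of_lt hp hRr
  -- the lifted chain
  set x' : Chains {p : unitInterval × unitInterval | |p.1.1 - p.2.1| ≤ R} n :=
    ∑ σ ∈ x.support.attach,
      Finsupp.single ⟨σ.1.1, fun i j => hbound σ.1 σ.2 i j⟩ (x σ.1) with hx'def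
  have hxx : chainsMap hsub n x' = x := by
    rw [hx'def, map_sum]
    have h1 : ∀ σ ∈ x.support.attach,
        chainsMap hsub n (Finsupp.single ⟨σ.1.1, fun i j => hbound σ.1 σ.2 i j⟩ (x σ.1))
          = Finsupp.single σ.1 (x σ.1) := by
      intro σ _
      show Finsupp.mapDomain _ _ = _
      erw [Finsupp.mapDomain_single]
      congr 1
    rw [Finset.sum_congr rfl h1, Finset.sum_attach x.support (fun σ => Finsupp.single σ (x σ))]
    have h2 := Finsupp.sum_single x
    rwa [Finsupp.sum] at h2
  -- the shift data
  set δ : ℝ := (r - R)/2 with hδdef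
  have hδ : 0 < δ := by rw [hδdef]; linarith
  have hRδ : R + δ < r := by rw [hδdef]; linarith
  set φ : unitInterval → unitInterval := shift δ hδ.le with hφdef
  set K : ℕ := ⌈1/δ⌉₊ with hKdef
  have hK1 : (1:ℝ) ≤ K * δ := by
    have h3 := Nat.le_ceil (1/δ)
    have h4 : (1/δ) * δ ≤ (K:ℝ) * δ := by
      apply mul_le_mul_of_nonneg_right _ hδ.le
      rw [hKdef]; exact_mod_cast h3
    calc (1:ℝ) = (1/δ) * δ := by field_simp
      _ ≤ (K:ℝ) * δ := h4
  have hv0 : (((⟨0, le_refl 0, zero_le_one⟩ : unitInterval), (⟨0, le_refl 0, zero_le_one⟩ : unitInterval))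
      ∈ {p : unitInterval × unitInterval | |p.1.1 - p.2.1| < r}) := by
    show |(0:ℝ) - 0| < r
    simpa using hr
  have hφK : ∀ t : unitInterval, (φ^[K]) t = (⟨0, le_refl 0, zero_le_one⟩ : unitInterval) := by
    intro t
    apply Subtype.ext
    rw [hφdef, shift_iter]
    exact max_eq_right (by linarith [t.2.2])
  -- the chain maps
  set m : ℕ → (Chains {p : unitInterval × unitInterval | |p.1.1 - p.2.1| ≤ R} n
      →+ Chains {p : unitInterval × unitInterval | |p.1.1 - p.2.1| < r} n) :=
    fun j => mapChains (φ^[j]) (fun {s t} h => (contig_shift r R δ hδ hRδ j).ff h) n with hmdef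
  have hm0 : m 0 x' = x := by
    have h5 : m 0 x' = chainsMap hsub n x' := rfl
    rw [h5, hxx]
  have hmK : m K x' = Finsupp.single
      (constSimp _ (⟨0, le_refl 0, zero_le_one⟩ : unitInterval) hv0 n)
      (tot _ n x') := by
    rw [hmdef]
    exact mapChains_const _ _ hv0 hφK n x'
  have hstep : ∀ j : ℕ, True := fun _ => trivial
  clear hstep
  cases n with
  | zero =>
    have hx0 : aug _ x = 0 := AddMonoidHom.mem_ker.mp hx
    have htot : tot _ 0 x' = 0 := by
      rw [← aug_eq_tot, ← aug_chainsMap hsub x', hxx]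
      exact hx0
    have hstep : ∀ j : ℕ, m (j+1) x' - m j x' ∈
        bdries {p : unitInterval × unitInterval | |p.1.1 - p.2.1| < r} 0 := by
      intro j
      refine ⟨hchain (contig_shift r R δ hδ hRδ j) 0 x', ?_⟩
      rw [homotopy0 (contig_shift r R δ hδ hRδ j) x']
    have htel : m K x' - m 0 x' ∈
        bdries {p : unitInterval × unitInterval | |p.1.1 - p.2.1| < r} 0 := by
      have hsum : m K x' - m 0 x' = ∑ j ∈ range K, (m (j+1) x' - m j x') :=
        (Finset.sum_range_sub (fun j => m j x') K).symm
      rw [hsum]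
      exact AddSubgroup.sum_mem _ fun j _ => hstep j
    have hFK : m K x' = 0 := by
      rw [hmK, htot, Finsupp.single_zero]
    have hfin := AddSubgroup.neg_mem _ htel
    rw [neg_sub, hFK, sub_zero, hm0] at hfin
    exact hfin
  | succ n' =>
    have hx1 : bd _ n' x = 0 := AddMonoidHom.mem_ker.mp hx
    have hinj : Function.Injective
        (fun σ : Simp {p : unitInterval × unitInterval | |p.1.1 - p.2.1| ≤ R} n' =>
          (⟨σ.1, fun i j => hsub (σ.2 i j)⟩ :
            Simp {p : unitInterval × unitInterval | |p.1.1 - p.2.1| < r} n')) := by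
      intro a b h
      have h2 := congrArg Subtype.val h
      exact Subtype.ext h2
    have hx'c : bd _ n' x' = 0 := by
      apply Finsupp.mapDomain_injective hinj
      have h6 := bd_comm hsub n' x'
      rw [hxx, hx1] at h6
      show Finsupp.mapDomain _ _ = Finsupp.mapDomain _ 0
      rw [Finsupp.mapDomain_zero]
      exact h6.symm
    have hstep : ∀ j : ℕ, m (j+1) x' - m j x' ∈
        bdries {p : unitInterval × unitInterval | |p.1.1 - p.2.1| < r} (n'+1) := by
      intro j
      refine ⟨hchain (contig_shift r R δ hδ hRδ j) (n'+1) x', ?_⟩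
      rw [homotopy (contig_shift r R δ hδ hRδ j) x', hx'c, map_zero, sub_zero]
    have htel : m K x' - m 0 x' ∈
        bdries {p : unitInterval × unitInterval | |p.1.1 - p.2.1| < r} (n'+1) := by
      have hsum : m K x' - m 0 x' = ∑ j ∈ range K, (m (j+1) x' - m j x') :=
        (Finset.sum_range_sub (fun j => m j x') K).symm
      rw [hsum]
      exact AddSubgroup.sum_mem _ fun j _ => hstep j
    have hFKmem : m K x' ∈
        bdries {p : unitInterval × unitInterval | |p.1.1 - p.2.1| < r} (n'+1) := by
      rcases Nat.even_or_odd n' with he | ho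
      · refine ⟨Finsupp.single (constSimp _ _ hv0 (n'+2)) (tot _ (n'+1) x'), ?_⟩
        rw [bd_const_single]
        rw [if_neg (by simp [Nat.even_add_one, he] : ¬ Even (n'+1))]
        exact hmK.symm
      · have h7 : bd _ n' (m K x') = 0 := by
          have h8 := bd_mapChains (φ^[K])
            (fun {s t} h => (contig_shift r R δ hδ hRδ K).ff h) n' x'
          rw [hx'c, map_zero] at h8
          exact h8
        rw [hmK, bd_const_single,
          if_neg ((Nat.not_even_iff_odd).mpr ho)] at h7
        have h9 := Finsupp.single_eq_zero.mp h7
        rw [hmK, h9, Finsupp.single_zero]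
        exact AddSubgroup.zero_mem _
    have h10 := AddSubgroup.sub_mem _ hFKmem htel
    rw [sub_sub_cancel, hm0] at h10
    exact h10

end VRAux
open VR in
/-- For every `r > 0`, the Vietoris–Rips (clique) complex of the unit
interval `I = [0,1]` with the relation `U_r = {(s,t) | |s − t| < r}` is acyclic:
all reduced simplicial homology groups vanish. -/
theorem stmt16 (r : ℝ) (hr : 0 < r) :
    ∀ n : ℕ, Subsingleton
      (redH {p : unitInterval × unitInterval | |p.1.1 - p.2.1| < r} n) := by
  intro n
  have htop : (bdries {p : unitInterval × unitInterval | |p.1.1 - p.2.1| < r} n).addSubgroupOf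
      (rcycles {p : unitInterval × unitInterval | |p.1.1 - p.2.1| < r} n) = ⊤ := by
    rw [AddSubgroup.eq_top_iff']
    intro y
    exact AddSubgroup.mem_addSubgroupOf.mpr (VRAux.main_mem r hr n y.1 y.2)
  show Subsingleton (_ ⧸ _)
  rw [htop]
  exact QuotientAddGroup.subsingleton_quotient_top
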